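/- Under the conditions |εᵢ*| ≤ λᵢ for all i, if μ̂ minimizes ‖(μ⁰ + ε*) - μ‖² + 2∑ᵢλᵢ|μᵢ| then for any μ: ‖μ̂ - μ⁰‖² ≤ ‖μ - μ⁰‖² + 4∑_{i∈S(μ)} λᵢ|μ̂ᵢ - μᵢ|. -/

import Mathlib

/-- If `|εᵢ*| ≤ λᵢ` for all `i` and `μ̂` minimizes
`μ ↦ ‖(μ⁰ + ε*) - μ‖² + 2 ∑ᵢ λᵢ |μᵢ|`, then for any `μ`:
`‖μ̂ - μ⁰‖² ≤ ‖μ - μ⁰‖² + 4 ∑_{i ∈ S(μ)} λᵢ |μ̂ᵢ - μᵢ|`. -/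
theorem lasso_oracle_basic_bound (n : ℕ) (mu0 eps lam muhat : Fin n → ℝ)
    (hlam : ∀ i, 0 < lam i)
    (heps : ∀ i, |eps i| ≤ lam i)
    (hmin : ∀ μ : Fin n → ℝ,
      ∑ i, ((mu0 i + eps i) - muhat i) ^ 2 + 2 * ∑ i, lam i * |muhat i| ≤
        ∑ i, ((mu0 i + eps i) - μ i) ^ 2 + 2 * ∑ i, lam i * |μ i|) :
    ∀ μ : Fin n → ℝ,
      ∑ i, (muhat i - mu0 i) ^ 2 ≤
        ∑ i, (μ i - mu0 i) ^ 2 +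
          4 * ∑ i ∈ Finset.univ.filter (fun i => μ i ≠ 0),
            lam i * |muhat i - μ i| := by
  intro μ
  have H := hmin μ
  have key : ∑ i, (((mu0 i + eps i) - μ i) ^ 2 + 2 * (lam i * |μ i|)
        + (muhat i - mu0 i) ^ 2) ≤
      ∑ i, (((mu0 i + eps i) - muhat i) ^ 2 + 2 * (lam i * |muhat i|)
        + (4 * (if μ i ≠ 0 then lam i * |muhat i - μ i| else 0))
        + (μ i - mu0 i) ^ 2) := by
    apply Finset.sum_le_sum
    intro i _
    have hl := hlam i
    have he := heps i
    have h1 : eps i * (muhat i - μ i) ≤ lam i * |muhat i - μ i| := by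
      calc eps i * (muhat i - μ i) ≤ |eps i * (muhat i - μ i)| := le_abs_self _
        _ = |eps i| * |muhat i - μ i| := abs_mul _ _
        _ ≤ lam i * |muhat i - μ i| :=
            mul_le_mul_of_nonneg_right he (abs_nonneg _)
    by_cases hz : μ i = 0
    · simp only [hz, ne_eq, not_true_eq_false, if_false]
      rw [hz] at h1
      have h0 : |muhat i - 0| = |muhat i| := by simp
      rw [h0] at h1
      have h2 : |(0 : ℝ)| = 0 := abs_zero
      nlinarith [h1, h2]
    · simp only [ne_eq, hz, not_false_eq_true, if_true]
      have h2 : |μ i| - |muhat i| ≤ |muhat i - μ i| := by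
        have := abs_sub_abs_le_abs_sub (μ i) (muhat i)
        rw [abs_sub_comm] at this
        linarith
      nlinarith [h1, h2, hl, abs_nonneg (muhat i - μ i)]
  simp only [Finset.sum_add_distrib] at key
  rw [← Finset.mul_sum, ← Finset.mul_sum] at key
  have e3 : ∑ i, 4 * (if μ i ≠ 0 then lam i * |muhat i - μ i| else 0)
      = 4 * ∑ i ∈ Finset.univ.filter (fun i => μ i ≠ 0),
          lam i * |muhat i - μ i| := by
    rw [Finset.sum_filter, ← Finset.mul_sum]
  rw [e3] at key
  linarith
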